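/- Let A and B be associative rings with identity, f : A → B a ring homomorphism, and J a proper two-sided ideal of B. Assume f⁻¹(J) ⊆ nil(A), i.e., every element of A mapped into J by f is nilpotent. If the subring f(A)+J of B is a weak Armendariz ring, then the amalgamation A⋈fJ is a weak Armendariz ring. -/

import Mathlib

open Polynomial

/-- A ring `R` is Armendariz if whenever `p * q = 0` for polynomials over `R`,
every product of a coefficient of `p` with a coefficient of `q` is zero. -/
def IsArmendariz (R : Type*) [Ring R] : Prop :=
  ∀ p q : R[X], p * q = 0 → ∀ i j : ℕ, p.coeff i * q.coeff j = 0

/-- A ring `R` is nil-Armendariz if whenever every coefficient of `p * q` is nilpotent,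
every product of a coefficient of `p` with a coefficient of `q` is nilpotent. -/
def IsNilArmendariz (R : Type*) [Ring R] : Prop :=
  ∀ p q : R[X], (∀ k : ℕ, IsNilpotent ((p * q).coeff k)) →
    ∀ i j : ℕ, IsNilpotent (p.coeff i * q.coeff j)

/-- A ring `R` is weak Armendariz if whenever `p * q = 0` for polynomials over `R`,
every product of a coefficient of `p` with a coefficient of `q` is nilpotent. -/
def IsWeakArmendariz (R : Type*) [Ring R] : Prop :=
  ∀ p q : R[X], p * q = 0 → ∀ i j : ℕ, IsNilpotent (p.coeff i * q.coeff j)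

/-- The amalgamation `A ⋈^f J = {(a, f a + j) | a ∈ A, j ∈ J}` of `A` and `B` along the
two-sided ideal `J` with respect to `f`, as a subring of `A × B`.  (A pair `(a, b)` has the
form `(a, f a + j)` with `j ∈ J` iff `b - f a ∈ J`.) -/
def amalgamation {A B : Type*} [Ring A] [Ring B] (f : A →+* B) (J : TwoSidedIdeal B) :
    Subring (A × B) where
  carrier := {p | p.2 - f p.1 ∈ J}
  zero_mem' := by simp [J.zero_mem]
  one_mem' := by simp [J.zero_mem]
  add_mem' := by
    intro x y hx hy
    have e : (x + y).2 - f ((x + y).1) = (x.2 - f x.1) + (y.2 - f y.1) := by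
      simp only [Prod.snd_add, Prod.fst_add, map_add]; abel
    show (x + y).2 - f ((x + y).1) ∈ J
    rw [e]; exact J.add_mem hx hy
  neg_mem' := by
    intro x hx
    have e : (-x).2 - f ((-x).1) = -(x.2 - f x.1) := by
      simp only [Prod.snd_neg, Prod.fst_neg, map_neg]; abel
    show (-x).2 - f ((-x).1) ∈ J
    rw [e]; exact J.neg_mem hx
  mul_mem' := by
    intro x y hx hy
    have e : (x * y).2 - f ((x * y).1) = x.2 * (y.2 - f y.1) + (x.2 - f x.1) * f y.1 := by
      simp only [Prod.snd_mul, Prod.fst_mul, map_mul, mul_sub, sub_mul]; abel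
    show (x * y).2 - f ((x * y).1) ∈ J
    rw [e]; exact J.add_mem (J.mul_mem_left _ _ hy) (J.mul_mem_right _ _ hx)

/-- The subring `f(A) + J = {f a + j | a ∈ A, j ∈ J}` of `B`.  (An element `b` has the form
`f a + j` with `j ∈ J` iff `b - f a ∈ J` for some `a`.) -/
def imageAddIdeal {A B : Type*} [Ring A] [Ring B] (f : A →+* B) (J : TwoSidedIdeal B) :
    Subring B where
  carrier := {b | ∃ a : A, b - f a ∈ J}
  zero_mem' := ⟨0, by simp [J.zero_mem]⟩
  one_mem' := ⟨1, by simp [J.zero_mem]⟩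
  add_mem' := by
    rintro x y ⟨a, ha⟩ ⟨b, hb⟩
    refine ⟨a + b, ?_⟩
    have e : x + y - f (a + b) = (x - f a) + (y - f b) := by
      rw [map_add]; abel
    rw [e]; exact J.add_mem ha hb
  neg_mem' := by
    rintro x ⟨a, ha⟩
    refine ⟨-a, ?_⟩
    have e : -x - f (-a) = -(x - f a) := by rw [map_neg]; abel
    rw [e]; exact J.neg_mem ha
  mul_mem' := by
    rintro x y ⟨a, ha⟩ ⟨b, hb⟩
    refine ⟨a * b, ?_⟩
    have e : x * y - f (a * b) = x * (y - f b) + (x - f a) * f b := by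
      rw [map_mul, mul_sub, sub_mul]; abel
    rw [e]; exact J.add_mem (J.mul_mem_left _ _ hb) (J.mul_mem_right _ _ ha)

theorem stmt_16 {A B : Type*} [Ring A] [Ring B] (f : A →+* B) (J : TwoSidedIdeal B)
    (hJ : (1 : B) ∉ J)
    (h : ∀ a : A, f a ∈ J → IsNilpotent a)
    (hB : IsWeakArmendariz (imageAddIdeal f J)) :
    IsWeakArmendariz (amalgamation f J) := by
  
  intro p q hpq i j
  -- second-coordinate projection into f(A)+J
  let g : amalgamation f J →+* imageAddIdeal f J :=
    { toFun := fun x => ⟨(x : A × B).2, (x : A × B).1, x.2⟩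
      map_one' := rfl
      map_mul' := fun x y => rfl
      map_zero' := rfl
      map_add' := fun x y => rfl }
  have h2 : (p.map g) * (q.map g) = 0 := by
    rw [← Polynomial.map_mul, hpq, Polynomial.map_zero]
  have hnil := hB _ _ h2 i j
  rw [Polynomial.coeff_map, Polynomial.coeff_map] at hnil
  set a : A := ((p.coeff i : A × B)).1 with ha
  set u : B := ((p.coeff i : A × B)).2 with hu
  set b : A := ((q.coeff j : A × B)).1 with hb
  set v : B := ((q.coeff j : A × B)).2 with hv
  have huv : IsNilpotent (u * v) := by
    have := hnil.map (imageAddIdeal f J).subtype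
    simp at this; exact this
  obtain ⟨n, hn⟩ := huv
  have hn' : (u * v) ^ (n + 1) = 0 := by rw [pow_succ, hn, zero_mul]
  have hmem : u * v - f (a * b) ∈ J := (p.coeff i * q.coeff j).2
  -- pass to the quotient B / J
  set π : B →+* J.ringCon.Quotient := J.ringCon.mk' with hπdef
  have hπ : π (u * v) = π (f (a * b)) :=
    J.ringCon.eq.mpr ((J.rel_iff _ _).mpr hmem)
  have hfab : f ((a * b) ^ (n + 1)) ∈ J := by
    have : π (f ((a * b) ^ (n + 1))) = 0 := by
      rw [map_pow, map_pow, ← hπ, ← map_pow, hn', map_zero]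
    have h0 : J.ringCon (f ((a * b) ^ (n + 1))) 0 := J.ringCon.eq.mp (by exact this)
    simpa using (J.rel_iff _ _).mp h0
  obtain ⟨m, hm⟩ := h _ hfab
  have hab : IsNilpotent (a * b) := ⟨(n + 1) * m, by rw [pow_mul]; exact hm⟩
  obtain ⟨k, hk⟩ := hab
  refine ⟨k + (n + 1), ?_⟩
  apply Subtype.ext
  have hcoe : ((p.coeff i * q.coeff j : amalgamation f J) : A × B) ^ (k + (n + 1)) =
      ((a * b) ^ (k + (n + 1)), (u * v) ^ (k + (n + 1))) := rfl
  show ((p.coeff i * q.coeff j : amalgamation f J) : A × B) ^ (k + (n + 1)) = 0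
  rw [hcoe, Prod.mk_eq_zero]
  constructor
  · rw [pow_add, hk, zero_mul]
  · rw [pow_add, hn', mul_zero]
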